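/- Let S be the square submatrix of the second Jacobian matrix Jac₂(F) with rows β_{i₁}, …, β_{i_r} (1 ≤ i₁ < ⋯ < i_r ≤ n) and columns β_{i₁j₁}, …, β_{i_r j_r}. If 1 ≤ j₁ ≤ j₂ ≤ ⋯ ≤ j_r ≤ n, then det(S) = ∏_{a=1}^{r} f_{j_a}. In particular, S is lower triangular up to the structure of Jac₂(F). -/
import Mathlib


open MvPolynomial

/-- First partial derivative f_i = ∂F/∂x_i. -/
noncomputable def pd {n : ℕ} (F : MvPolynomial (Fin n) ℂ) (i : Fin n) : MvPolynomial (Fin n) ℂ :=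
  pderiv i F

/-- Second partial derivative f_{ij} = ∂²F/∂x_i∂x_j. -/
noncomputable def pd2 {n : ℕ} (F : MvPolynomial (Fin n) ℂ) (i j : Fin n) : MvPolynomial (Fin n) ℂ :=
  pderiv i (pderiv j F)

/-- Q_{ij;kl}(F) = f_{ik} f_j f_l − f_{jk} f_i f_l − f_{il} f_j f_k + f_{jl} f_i f_k. -/
noncomputable def Qq {n : ℕ} (F : MvPolynomial (Fin n) ℂ) (i j k l : Fin n) :
    MvPolynomial (Fin n) ℂ :=
  pd2 F i k * pd F j * pd F l - pd2 F j k * pd F i * pd F l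
    - pd2 F i l * pd F j * pd F k + pd2 F j l * pd F i * pd F k

/-- Second Jacobian matrix: rows β₀,…,β_n (row 0 = β₀, row t.succ = β_t);
columns β_{0k} (Sum.inl k) and β_{ij} (Sum.inr (i,j)). -/
noncomputable def jac2 {n : ℕ} (F : MvPolynomial (Fin n) ℂ) :
    Fin (n + 1) → (Fin n ⊕ Fin n × Fin n) → MvPolynomial (Fin n) ℂ := fun r col =>
  match col with
  | Sum.inl k => if r = 0 then pderiv k F else 0
  | Sum.inr (i, j) =>
      if r = 0 then
        (if i = j then MvPolynomial.C (2⁻¹ : ℂ) * pderiv i (pderiv i F)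
         else pderiv i (pderiv j F))
      else if r = i.succ then pderiv j F
      else if r = j.succ then pderiv i F
      else 0

/-- Jacobian ideal J₁(F) = (∂₁F, …, ∂_nF). -/
noncomputable def J1 {n : ℕ} (F : MvPolynomial (Fin n) ℂ) : Ideal (MvPolynomial (Fin n) ℂ) :=
  Ideal.span (Set.range fun i : Fin n => pderiv i F)

/-- The ideal Q(F) generated by all Q_{ij;kl}(F). -/
noncomputable def QI {n : ℕ} (F : MvPolynomial (Fin n) ℂ) : Ideal (MvPolynomial (Fin n) ℂ) :=
  Ideal.span {q | ∃ i j k l : Fin n, q = Qq F i j k l}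

/-- Second Jacobian ideal: ideal of maximal minors of Jac₂(F). -/
noncomputable def J2 {n : ℕ} (F : MvPolynomial (Fin n) ℂ) : Ideal (MvPolynomial (Fin n) ℂ) :=
  Ideal.span {d | ∃ c : Fin (n + 1) → (Fin n ⊕ Fin n × Fin n),
    d = Matrix.det (Matrix.of fun a b => jac2 F a (c b))}


lemma jac2_entry {n r : ℕ} (F : MvPolynomial (Fin n) ℂ) (iv jv : Fin r → Fin n)
    (hi : StrictMono iv) (a b : Fin r) :
    jac2 F (iv a).succ (Sum.inr (iv b, jv b)) =
      if a = b then pderiv (jv b) F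
      else if iv a = jv b then pderiv (iv b) F else 0 := by
  unfold jac2
  simp only [Fin.succ_ne_zero, if_false, Fin.succ_inj]
  by_cases hab : a = b
  · subst hab; simp [hi.injective.eq_iff]
  · have : iv a ≠ iv b := fun h => hab (hi.injective h)
    simp [this, hab]

lemma perm_key {n r : ℕ} (iv jv : Fin r → Fin n) (hi : StrictMono iv) (hj : Monotone jv)
    (σ : Equiv.Perm (Fin r)) (hσ : σ ≠ 1)
    (h : ∀ i, σ i ≠ i → iv (σ i) = jv i) : False := by
  classical
  have hS : (Finset.univ.filter (fun i => σ i ≠ i)).Nonempty := by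
    by_contra hc
    simp only [Finset.not_nonempty_iff_eq_empty, Finset.filter_eq_empty_iff] at hc
    exact hσ (Equiv.ext fun i => not_not.mp (hc (Finset.mem_univ i)))
  set S := Finset.univ.filter (fun i => σ i ≠ i) with hSdef
  set m := S.max' hS with hm
  have hmS : m ∈ S := S.max'_mem hS
  have hmne : σ m ≠ m := by
    have := Finset.mem_filter.mp hmS; exact this.2
  have hσmS : σ m ∈ S := by
    refine Finset.mem_filter.mpr ⟨Finset.mem_univ _, fun hc => hmne ?_⟩
    exact σ.injective hc
  have hσm_lt : σ m < m := lt_of_le_of_ne (S.le_max' _ hσmS) (by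
    intro hc; exact hmne hc)
  set b := σ.symm m with hb
  have hσb : σ b = m := σ.apply_symm_apply m
  have hmb : b ≠ m := fun hc => hmne (by rw [← hc, hσb]; exact hc.symm)
  have hbne : σ b ≠ b := by rw [hσb]; exact fun hc => hmb hc.symm
  have hbS : b ∈ S := Finset.mem_filter.mpr ⟨Finset.mem_univ _, hbne⟩
  have hb_lt : b < m := lt_of_le_of_ne (S.le_max' _ hbS) hmb
  have h1 : iv m = jv b := by rw [← hσb]; exact h b hbne
  have h2 : iv (σ m) = jv m := h m hmne
  have : iv m ≤ jv m := h1 ▸ hj hb_lt.le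
  have : jv m < iv m := h2 ▸ hi hσm_lt
  omega

theorem stmt8 {n r : ℕ} (F : MvPolynomial (Fin n) ℂ) (iv jv : Fin r → Fin n)
    (hi : StrictMono iv) (hj : Monotone jv) :
    Matrix.det (Matrix.of fun a b : Fin r => jac2 F (iv a).succ (Sum.inr (iv b, jv b))) =
      ∏ a : Fin r, pderiv (jv a) F := by
  classical
  rw [Matrix.det_apply]
  rw [Finset.sum_eq_single (1 : Equiv.Perm (Fin r))]
  · simp only [Equiv.Perm.sign_one, one_smul, Equiv.Perm.one_apply, Matrix.of_apply,
      jac2_entry F iv jv hi, if_pos rfl]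
    simp [pd]
  · intro σ _ hσ
    have : ∃ i, (Matrix.of fun a b : Fin r =>
        jac2 F (iv a).succ (Sum.inr (iv b, jv b))) (σ i) i = 0 := by
      by_contra hc
      push_neg at hc
      refine perm_key iv jv hi hj σ hσ (fun i hne => ?_)
      have := hc i
      rw [Matrix.of_apply, jac2_entry F iv jv hi, if_neg hne] at this
      by_contra hne2
      rw [if_neg hne2] at this
      exact this rfl
    obtain ⟨i, hi0⟩ := this
    rw [Finset.prod_eq_zero (f := fun j : Fin r =>
      (Matrix.of fun a b : Fin r => jac2 F (iv a).succ (Sum.inr (iv b, jv b))) (σ j) j)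
      (Finset.mem_univ i) hi0, smul_zero]
  · intro h; exact absurd (Finset.mem_univ _) h
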